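/- (One-step recursion for accelerated RSD.) Let A ∈ ℝ^{m×n}, x^0 with A x^0 = b, M symmetric positive semidefinite and positive definite on ker(A), and suppose f : ℝ^n → ℝ is differentiable and satisfies on x^0 + ker(A) the smoothness inequality f(y) ≤ f(x) + ⟨∇f(x), y−x⟩ + ½(y−x)^T M(y−x) and the strong convexity inequality f(x) ≥ f(y) + ⟨∇f(y), x−y⟩ + (σ_Z/2)(x−y)^T Z†(x−y) with σ_Z ≥ 0. Let S_1, …, S_N be sketch matrices with probabilities P_i summing to 1, Z = Σ_i P_i Z_{S_i} positive definite on ker(A), and let ν ≥ ν_max := max{ (Σ_i P_i u^T Z_{S_i} Z† Z_{S_i} u)/(u^T Z u) : u ∈ ker(A), u ≠ 0 }. Fix α ∈ (0,1], β ∈ (0,1], γ > 0, points x, v ∈ x^0 + ker(A), a minimizer x* of f over {x : Ax = b} with optimal value f*, and set y = α v + (1−α) x. For a sketch S sampled with probability P_i, define x⁺ = y − Z_S ∇f(y) and v⁺ = β v + (1−β) y − γ Z_S ∇f(y). Then Σ_i P_i [ (v⁺_i − x*)^T Z† (v⁺_i − x*) + 2 γ² ν (f(x⁺_i) − f*) ]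 ≤ β [ (v − x*)^T Z† (v − x*) + 2γ((1−α)/α)(f(x) − f*) ] + (1 − β − γ σ_Z) (y − x*)^T Z† (y − x*) + ( 2γ²ν − 2γ − 2γβ(1−α)/α ) (f(y) − f*), where x⁺_i, v⁺_i denote the updates computed with S = S_i. -/

import Mathlib

open Matrix

-- The Moore–Penrose pseudoinverse of a real matrix, defined via the four
-- Penrose conditions (which have a unique solution for every real matrix).
open Classical in
noncomputable def mpinv {k l : Type*} [Fintype k] [Fintype l] (B : Matrix k l ℝ) :
    Matrix l k ℝ :=
  if h : ∃ X : Matrix l k ℝ,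
      B * X * B = B ∧ X * B * X = X ∧ (B * X)ᵀ = B * X ∧ (X * B)ᵀ = X * B
  then h.choose else 0

/-- `P_S = I - (AS)†(AS)`, the orthogonal projection onto `ker(AS)`. -/
noncomputable def Pmat {m n p : ℕ} (A : Matrix (Fin m) (Fin n) ℝ)
    (S : Matrix (Fin n) (Fin p) ℝ) : Matrix (Fin p) (Fin p) ℝ :=
  1 - mpinv (A * S) * (A * S)

/-- `Z_S = S P_S (P_Sᵀ Sᵀ M S P_S)† P_Sᵀ Sᵀ`. -/
noncomputable def Zmat {m n p : ℕ} (A : Matrix (Fin m) (Fin n) ℝ)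
    (M : Matrix (Fin n) (Fin n) ℝ) (S : Matrix (Fin n) (Fin p) ℝ) :
    Matrix (Fin n) (Fin n) ℝ :=
  S * Pmat A S * mpinv ((Pmat A S)ᵀ * Sᵀ * M * S * Pmat A S) * (Pmat A S)ᵀ * Sᵀ

/-- The gradient of `f : ℝ^n → ℝ`, as a vector of partial derivatives. -/
noncomputable def gradv {n : ℕ} (f : (Fin n → ℝ) → ℝ) (x : Fin n → ℝ) : Fin n → ℝ :=
  fun i => fderiv ℝ f x (Pi.single i 1)

section MPbasics

lemma exists_mp_herm {k : Type*} [Fintype k] [DecidableEq k] (B : Matrix k k ℝ)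
    (hB : B.IsHermitian) :
    ∃ X : Matrix k k ℝ,
      B * X * B = B ∧ X * B * X = X ∧ (B * X)ᵀ = B * X ∧ (X * B)ᵀ = X * B := by
  set U : Matrix k k ℝ := (hB.eigenvectorUnitary : Matrix k k ℝ) with hU
  set d : k → ℝ := RCLike.ofReal ∘ hB.eigenvalues with hd
  have hUU' : Uᵀ * U = 1 := by
    have := (Matrix.mem_unitaryGroup_iff').mp hB.eigenvectorUnitary.2
    simpa [star, hU] using this
  have hspec : B = U * diagonal d * Uᵀ := by
    have := hB.spectral_theorem
    simpa [star, hU, hd] using this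
  have key : ∀ e e' : k → ℝ,
      (U * diagonal e * Uᵀ) * (U * diagonal e' * Uᵀ) = U * diagonal (e * e') * Uᵀ := by
    intro e e'
    have : diagonal e * diagonal e' = diagonal (e * e') := diagonal_mul_diagonal e e'
    calc (U * diagonal e * Uᵀ) * (U * diagonal e' * Uᵀ)
        = U * (diagonal e * (Uᵀ * U) * diagonal e') * Uᵀ := by noncomm_ring
      _ = U * diagonal (e * e') * Uᵀ := by rw [hUU']; rw [mul_one, this]
  have keyT : ∀ e : k → ℝ, (U * diagonal e * Uᵀ)ᵀ = U * diagonal e * Uᵀ := by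
    intro e
    rw [transpose_mul, transpose_mul, transpose_transpose, diagonal_transpose]
    noncomm_ring
  have h1 : d * ((fun i => (d i)⁻¹) * d) = d := by
    funext i
    by_cases h : d i = 0 <;> simp [Pi.mul_apply, h] <;> field_simp
  have h2 : (fun i => (d i)⁻¹) * (d * fun i => (d i)⁻¹) = fun i => (d i)⁻¹ := by
    funext i
    by_cases h : d i = 0 <;> simp [Pi.mul_apply, h] <;> field_simp
  refine ⟨U * diagonal (fun i => (d i)⁻¹) * Uᵀ, ?_, ?_, ?_, ?_⟩
  · rw [hspec, key, key, mul_assoc d, h1]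
  · rw [hspec, key, key, mul_assoc ((fun i => (d i)⁻¹)), h2, mul_assoc]
  · rw [hspec, key, keyT]
  · rw [hspec, key, keyT]

lemma mp_unique {k l : Type*} [Fintype k] [Fintype l] (B : Matrix k l ℝ)
    (X Y : Matrix l k ℝ)
    (hX : B * X * B = B ∧ X * B * X = X ∧ (B * X)ᵀ = B * X ∧ (X * B)ᵀ = X * B)
    (hY : B * Y * B = B ∧ Y * B * Y = Y ∧ (B * Y)ᵀ = B * Y ∧ (Y * B)ᵀ = Y * B) :
    X = Y := by
  obtain ⟨hX1, hX2, hX3, hX4⟩ := hX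
  obtain ⟨hY1, hY2, hY3, hY4⟩ := hY
  have hBX : B * X = B * Y := by
    calc B * X = (B * X)ᵀ := hX3.symm
      _ = ((B * Y * B) * X)ᵀ := by rw [hY1]
      _ = ((B * Y) * (B * X))ᵀ := by rw [Matrix.mul_assoc (B * Y) B X]
      _ = (B * X)ᵀ * (B * Y)ᵀ := transpose_mul _ _
      _ = (B * X) * (B * Y) := by rw [hX3, hY3]
      _ = (B * X * B) * Y := by rw [Matrix.mul_assoc (B * X) B Y]
      _ = B * Y := by rw [hX1]
  have hXB : X * B = Y * B := by
    calc X * B = (X * B)ᵀ := hX4.symm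
      _ = (X * (B * Y * B))ᵀ := by rw [hY1]
      _ = ((X * B) * (Y * B))ᵀ := by
          rw [Matrix.mul_assoc B Y B, ← Matrix.mul_assoc X B (Y * B)]
      _ = (Y * B)ᵀ * (X * B)ᵀ := transpose_mul _ _
      _ = (Y * B) * (X * B) := by rw [hX4, hY4]
      _ = Y * (B * X * B) := by rw [Matrix.mul_assoc Y B (X * B), ← Matrix.mul_assoc B X B]
      _ = Y * B := by rw [hX1]
  calc X = X * B * X := hX2.symm
    _ = X * (B * Y) := by rw [Matrix.mul_assoc X B X, hBX]
    _ = (Y * B) * Y := by rw [← Matrix.mul_assoc X B Y, hXB]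
    _ = Y := hY2

/-- For symmetric `G`, any Penrose pseudoinverse is symmetric. -/
lemma mp_symm {l : Type*} [Fintype l] (G X : Matrix l l ℝ) (hGs : Gᵀ = G)
    (h : G * X * G = G ∧ X * G * X = X ∧ (G * X)ᵀ = G * X ∧ (X * G)ᵀ = X * G) :
    Xᵀ = X := by
  obtain ⟨h1, h2, h3, h4⟩ := h
  refine mp_unique G Xᵀ X ⟨?_, ?_, ?_, ?_⟩ ⟨h1, h2, h3, h4⟩
  · have e1 : G * Xᵀ * G = (G * X * G)ᵀ := by
      rw [transpose_mul, transpose_mul, hGs, ← Matrix.mul_assoc]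
    rw [e1, h1, hGs]
  · have e2 : Xᵀ * G * Xᵀ = (X * G * X)ᵀ := by
      rw [transpose_mul, transpose_mul, hGs, ← Matrix.mul_assoc]
    rw [e2, h2]
  · rw [transpose_mul, transpose_transpose, hGs, ← h4, transpose_mul, hGs]
  · rw [transpose_mul, transpose_transpose, hGs, ← h3, transpose_mul, hGs]

lemma exists_mp {k l : Type*} [Fintype k] [Fintype l] [DecidableEq l] (B : Matrix k l ℝ) :
    ∃ X : Matrix l k ℝ,
      B * X * B = B ∧ X * B * X = X ∧ (B * X)ᵀ = B * X ∧ (X * B)ᵀ = X * B := by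
  set G : Matrix l l ℝ := Bᵀ * B with hG
  have hGs : Gᵀ = G := by rw [hG, transpose_mul, transpose_transpose]
  have hGh : G.IsHermitian := by
    rw [Matrix.IsHermitian, conjTranspose_eq_transpose_of_trivial]; exact hGs
  obtain ⟨W, hW1, hW2, hW3, hW4⟩ := exists_mp_herm G hGh
  have hWs : Wᵀ = W := mp_symm G W hGs ⟨hW1, hW2, hW3, hW4⟩
  have hker : ∀ v : l → ℝ, G.mulVec v = 0 → B.mulVec v = 0 := by
    intro v hv
    have h0 : B.mulVec v ⬝ᵥ B.mulVec v = 0 := by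
      have : v ⬝ᵥ G.mulVec v = 0 := by rw [hv]; simp
      rw [hG, ← Matrix.mulVec_mulVec, Matrix.dotProduct_mulVec, Matrix.vecMul_transpose] at this
      exact this
    exact (dotProduct_self_eq_zero).mp h0
  have hBWG : B * (W * G) = B := by
    have hz : ∀ v : l → ℝ, (B * (W * G)).mulVec v = B.mulVec v := by
      intro v
      have h5 : G.mulVec (v - (W * G).mulVec v) = 0 := by
        rw [Matrix.mulVec_sub, Matrix.mulVec_mulVec, ← Matrix.mul_assoc, hW1, sub_self]
      have h6 := hker _ h5
      rw [Matrix.mulVec_sub] at h6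
      have h7 := sub_eq_zero.mp h6
      rw [← Matrix.mulVec_mulVec, h7]
    ext i j
    have := congrFun (hz (Pi.single j 1)) i
    simpa [Matrix.mulVec_single] using this
  refine ⟨W * Bᵀ, ?_, ?_, ?_, ?_⟩
  · rw [Matrix.mul_assoc B (W * Bᵀ) B, Matrix.mul_assoc W Bᵀ B, ← hG, hBWG]
  · rw [Matrix.mul_assoc W Bᵀ B, ← hG, ← Matrix.mul_assoc (W * G) W Bᵀ, hW2]
  · rw [transpose_mul, transpose_mul, transpose_transpose, hWs, ← Matrix.mul_assoc]
  · rw [Matrix.mul_assoc W Bᵀ B, ← hG]; exact hW4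

lemma mpinv_spec {k l : Type*} [Fintype k] [Fintype l] [DecidableEq l]
    (B : Matrix k l ℝ) :
    B * mpinv B * B = B ∧ mpinv B * B * mpinv B = mpinv B ∧
      (B * mpinv B)ᵀ = B * mpinv B ∧ (mpinv B * B)ᵀ = mpinv B * B := by
  have h := exists_mp B
  rw [mpinv, dif_pos h]
  exact h.choose_spec

lemma mpinv_symm {l : Type*} [Fintype l] [DecidableEq l] (B : Matrix l l ℝ)
    (hB : Bᵀ = B) : (mpinv B)ᵀ = mpinv B :=
  mp_symm B (mpinv B) hB (mpinv_spec B)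

end MPbasics

set_option maxHeartbeats 1000000 in
lemma sandwich {n q : Type*} [Fintype n] [Fintype q] [DecidableEq q]
    (M : Matrix n n ℝ) (hMs : Mᵀ = M) (C : Matrix n q ℝ) :
    (C * mpinv (Cᵀ * M * C) * Cᵀ)ᵀ = C * mpinv (Cᵀ * M * C) * Cᵀ ∧
      (C * mpinv (Cᵀ * M * C) * Cᵀ) * M * (C * mpinv (Cᵀ * M * C) * Cᵀ) =
        C * mpinv (Cᵀ * M * C) * Cᵀ := by
  have hGs : (Cᵀ * M * C)ᵀ = Cᵀ * M * C := by
    rw [transpose_mul, transpose_mul, transpose_transpose, hMs, ← Matrix.mul_assoc]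
  obtain ⟨hW1, hW2, hW3, hW4⟩ := mpinv_spec (Cᵀ * M * C)
  have hWs := mpinv_symm (Cᵀ * M * C) hGs
  constructor
  · rw [transpose_mul, transpose_mul, transpose_transpose, hWs, ← Matrix.mul_assoc]
  · calc (C * mpinv (Cᵀ * M * C) * Cᵀ) * M * (C * mpinv (Cᵀ * M * C) * Cᵀ)
        = C * (mpinv (Cᵀ * M * C) * (Cᵀ * M * C) * mpinv (Cᵀ * M * C)) * Cᵀ := by
          simp only [Matrix.mul_assoc]
      _ = C * mpinv (Cᵀ * M * C) * Cᵀ := by rw [hW2, Matrix.mul_assoc]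

lemma Zmat_eq {m n p : ℕ} (A : Matrix (Fin m) (Fin n) ℝ) (M : Matrix (Fin n) (Fin n) ℝ)
    (S : Matrix (Fin n) (Fin p) ℝ) :
    Zmat A M S = (S * Pmat A S) * mpinv ((S * Pmat A S)ᵀ * M * (S * Pmat A S)) *
      (S * Pmat A S)ᵀ := by
  rw [Zmat, transpose_mul]
  simp only [Matrix.mul_assoc]

lemma Zmat_symm {m n p : ℕ} (A : Matrix (Fin m) (Fin n) ℝ) (M : Matrix (Fin n) (Fin n) ℝ)
    (hMs : Mᵀ = M) (S : Matrix (Fin n) (Fin p) ℝ) : (Zmat A M S)ᵀ = Zmat A M S := by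
  rw [Zmat_eq]; exact (sandwich M hMs _).1

lemma Zmat_MZ {m n p : ℕ} (A : Matrix (Fin m) (Fin n) ℝ) (M : Matrix (Fin n) (Fin n) ℝ)
    (hMs : Mᵀ = M) (S : Matrix (Fin n) (Fin p) ℝ) :
    Zmat A M S * M * Zmat A M S = Zmat A M S := by
  rw [Zmat_eq]; exact (sandwich M hMs _).2

lemma Zmat_A {m n p : ℕ} (A : Matrix (Fin m) (Fin n) ℝ) (M : Matrix (Fin n) (Fin n) ℝ)
    (S : Matrix (Fin n) (Fin p) ℝ) : A * Zmat A M S = 0 := by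
  have hASP : A * S * Pmat A S = 0 := by
    rw [Pmat, Matrix.mul_sub, Matrix.mul_one, ← Matrix.mul_assoc, (mpinv_spec (A * S)).1,
      sub_self]
  calc A * Zmat A M S
      = (A * S * Pmat A S) *
        (mpinv ((Pmat A S)ᵀ * Sᵀ * M * S * Pmat A S) * ((Pmat A S)ᵀ * Sᵀ)) := by
        rw [Zmat]; simp only [Matrix.mul_assoc]
    _ = 0 := by rw [hASP, Matrix.zero_mul]

lemma dot_sum_mulVec {n N : ℕ} (P : Fin N → ℝ) (Zi : Fin N → Matrix (Fin n) (Fin n) ℝ)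
    (a c : Fin n → ℝ) :
    a ⬝ᵥ (∑ i, P i • Zi i).mulVec c = ∑ i, P i * (a ⬝ᵥ (Zi i).mulVec c) := by
  have h1 : (∑ i, P i • Zi i).mulVec c = ∑ i, P i • ((Zi i).mulVec c) := by
    induction (Finset.univ : Finset (Fin N)) using Finset.induction_on with
    | empty => simp [Matrix.zero_mulVec]
    | insert _ _ hns ih =>
        rw [Finset.sum_insert hns, Finset.sum_insert hns, Matrix.add_mulVec,
          Matrix.smul_mulVec, ih]
  rw [h1]
  simp only [dotProduct, Finset.sum_apply, Pi.smul_apply, smul_eq_mul, Finset.mul_sum]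
  rw [Finset.sum_comm]
  exact Finset.sum_congr rfl fun i _ => Finset.sum_congr rfl fun j _ => by ring

set_option maxHeartbeats 1000000 in
/-- one-step recursion (expected descent) for the accelerated
random sketch descent method. -/
theorem stmt14 {m n N : ℕ} (A : Matrix (Fin m) (Fin n) ℝ) (b : Fin m → ℝ)
    (x0 : Fin n → ℝ) (hx0 : A.mulVec x0 = b)
    (M : Matrix (Fin n) (Fin n) ℝ) (hM : M.PosSemidef)
    (hMpd : ∀ u : Fin n → ℝ, A.mulVec u = 0 → u ≠ 0 → 0 < u ⬝ᵥ M.mulVec u)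
    (f : (Fin n → ℝ) → ℝ) (hdiff : Differentiable ℝ f)
    (hsmooth : ∀ x y : Fin n → ℝ, A.mulVec x = b → A.mulVec y = b →
      f y ≤ f x + gradv f x ⬝ᵥ (y - x) + (1 / 2) * ((y - x) ⬝ᵥ M.mulVec (y - x)))
    (p : Fin N → ℕ) (S : ∀ i : Fin N, Matrix (Fin n) (Fin (p i)) ℝ)
    (P : Fin N → ℝ) (hP : ∀ i, 0 ≤ P i) (hPsum : ∑ i, P i = 1)
    (Z : Matrix (Fin n) (Fin n) ℝ) (hZ : Z = ∑ i, P i • Zmat A M (S i))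
    (hpd : ∀ u : Fin n → ℝ, A.mulVec u = 0 → u ≠ 0 → 0 < u ⬝ᵥ Z.mulVec u)
    (σZ : ℝ) (hσ : 0 ≤ σZ)
    (hsc : ∀ x y : Fin n → ℝ, A.mulVec x = b → A.mulVec y = b →
      f x ≥ f y + gradv f y ⬝ᵥ (x - y) +
        (σZ / 2) * ((x - y) ⬝ᵥ (mpinv Z).mulVec (x - y)))
    (ν : ℝ)
    (hν : ∀ u : Fin n → ℝ, A.mulVec u = 0 → u ≠ 0 →
      (∑ i, P i * ((Zmat A M (S i)).mulVec u ⬝ᵥ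
          (mpinv Z).mulVec ((Zmat A M (S i)).mulVec u))) ≤ ν * (u ⬝ᵥ Z.mulVec u))
    (α β γ : ℝ) (hα : 0 < α ∧ α ≤ 1) (hβ : 0 < β ∧ β ≤ 1) (hγ : 0 < γ)
    (x v : Fin n → ℝ) (hx : A.mulVec x = b) (hv : A.mulVec v = b)
    (xs : Fin n → ℝ) (hxs : A.mulVec xs = b)
    (fstar : ℝ) (hfstar : f xs = fstar)
    (hfs : ∀ z : Fin n → ℝ, A.mulVec z = b → fstar ≤ f z)
    (y : Fin n → ℝ) (hy : y = α • v + (1 - α) • x)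
    (xp vp : Fin N → (Fin n → ℝ))
    (hxp : ∀ i, xp i = y - (Zmat A M (S i)).mulVec (gradv f y))
    (hvp : ∀ i, vp i = β • v + (1 - β) • y - γ • (Zmat A M (S i)).mulVec (gradv f y)) :
    ∑ i, P i * ((vp i - xs) ⬝ᵥ (mpinv Z).mulVec (vp i - xs) +
        2 * γ ^ 2 * ν * (f (xp i) - fstar)) ≤
      β * ((v - xs) ⬝ᵥ (mpinv Z).mulVec (v - xs) +
          2 * γ * ((1 - α) / α) * (f x - fstar)) +
        (1 - β - γ * σZ) * ((y - xs) ⬝ᵥ (mpinv Z).mulVec (y - xs)) +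
        (2 * γ ^ 2 * ν - 2 * γ - 2 * γ * β * ((1 - α) / α)) * (f y - fstar) := by
  obtain ⟨hα0, hα1⟩ := hα
  obtain ⟨hβ0, hβ1⟩ := hβ
  have hMs : Mᵀ = M := by
    have := hM.1
    rwa [Matrix.IsHermitian, conjTranspose_eq_transpose_of_trivial] at this
  have hMpsd : ∀ w : Fin n → ℝ, 0 ≤ w ⬝ᵥ M.mulVec w := by
    intro w; have := hM.dotProduct_mulVec_nonneg w; simpa using this
  set W := mpinv Z with hWdef
  set g := gradv f y with hgdef
  -- symmetric bilinear helper
  have hsym : ∀ (B : Matrix (Fin n) (Fin n) ℝ), Bᵀ = B → ∀ a c : Fin n → ℝ,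
      a ⬝ᵥ B.mulVec c = B.mulVec a ⬝ᵥ c := by
    intro B hB a c
    rw [Matrix.dotProduct_mulVec, ← Matrix.mulVec_transpose, hB]
  have hZs : Zᵀ = Z := by
    rw [hZ, Matrix.transpose_sum]
    exact Finset.sum_congr rfl fun i _ => by
      rw [Matrix.transpose_smul, Zmat_symm A M hMs (S i)]
  have hZA : A * Z = 0 := by
    rw [hZ, Matrix.mul_sum]
    exact Finset.sum_eq_zero fun i _ => by
      rw [Matrix.mul_smul, Zmat_A A M (S i), smul_zero]
  have hW := mpinv_spec Z
  rw [← hWdef] at hW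
  have hWs : Wᵀ = W := mpinv_symm Z hZs
  have hdotW : ∀ a c : Fin n → ℝ, a ⬝ᵥ W.mulVec c = c ⬝ᵥ W.mulVec a := by
    intro a c; rw [hsym W hWs a c, dotProduct_comm]
  have hbilin : ∀ (a c : Fin n → ℝ) (s t : ℝ),
      (s • a + t • c) ⬝ᵥ W.mulVec (s • a + t • c)
        = s^2 * (a ⬝ᵥ W.mulVec a) + s*t*(a ⬝ᵥ W.mulVec c) + s*t*(c ⬝ᵥ W.mulVec a)
          + t^2 * (c ⬝ᵥ W.mulVec c) := by
    intro a c s t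
    simp only [Matrix.mulVec_add, Matrix.mulVec_smul, dotProduct_add, add_dotProduct,
      dotProduct_smul, smul_dotProduct, smul_eq_mul]
    ring
  have hbilin2 : ∀ (a c : Fin n → ℝ),
      (a - c) ⬝ᵥ W.mulVec (a - c)
        = (a ⬝ᵥ W.mulVec a) - (a ⬝ᵥ W.mulVec c) - (c ⬝ᵥ W.mulVec a)
          + (c ⬝ᵥ W.mulVec c) := by
    intro a c
    simp only [Matrix.mulVec_sub, dotProduct_sub, sub_dotProduct]
    ring
  have hbilin3 : ∀ (a q : Fin n → ℝ) (t : ℝ),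
      (a - t • q) ⬝ᵥ W.mulVec (a - t • q)
        = (a ⬝ᵥ W.mulVec a) - t*(a ⬝ᵥ W.mulVec q) - t*(q ⬝ᵥ W.mulVec a)
          + t^2 * (q ⬝ᵥ W.mulVec q) := by
    intro a q t
    simp only [Matrix.mulVec_sub, Matrix.mulVec_smul, dotProduct_sub, sub_dotProduct,
      dotProduct_smul, smul_dotProduct, smul_eq_mul]
    ring
  have sumZ : ∀ a c : Fin n → ℝ,
      ∑ i, P i * (a ⬝ᵥ (Zmat A M (S i)).mulVec c) = a ⬝ᵥ Z.mulVec c := by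
    intro a c; rw [hZ]; exact (dot_sum_mulVec P (fun i => Zmat A M (S i)) a c).symm
  have hZiquad : ∀ i (w : Fin n → ℝ), w ⬝ᵥ (Zmat A M (S i)).mulVec w
      = ((Zmat A M (S i)).mulVec w) ⬝ᵥ M.mulVec ((Zmat A M (S i)).mulVec w) := by
    intro i w
    conv_lhs => rw [← Zmat_MZ A M hMs (S i)]
    rw [← Matrix.mulVec_mulVec, ← Matrix.mulVec_mulVec,
      hsym (Zmat A M (S i)) (Zmat_symm A M hMs (S i))]
  have hZipsd : ∀ i (w : Fin n → ℝ), 0 ≤ w ⬝ᵥ (Zmat A M (S i)).mulVec w := by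
    intro i w; rw [hZiquad i w]; exact hMpsd _
  have hZpsd : ∀ w : Fin n → ℝ, 0 ≤ w ⬝ᵥ Z.mulVec w := by
    intro w; rw [← sumZ w w]
    exact Finset.sum_nonneg fun i _ => mul_nonneg (hP i) (hZipsd i w)
  have hWpsd : ∀ w : Fin n → ℝ, 0 ≤ w ⬝ᵥ W.mulVec w := by
    intro w
    have h1 : w ⬝ᵥ W.mulVec w = (W.mulVec w) ⬝ᵥ Z.mulVec (W.mulVec w) := by
      conv_lhs => rw [← hW.2.1]
      rw [← Matrix.mulVec_mulVec, ← Matrix.mulVec_mulVec, hsym W hWs]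
    rw [h1]; exact hZpsd _
  have hAdiff : ∀ u : Fin n → ℝ, A.mulVec u = b → A.mulVec (u - xs) = 0 := by
    intro u hu; rw [Matrix.mulVec_sub, hu, hxs, sub_self]
  have hAy : A.mulVec y = b := by
    rw [hy, Matrix.mulVec_add, Matrix.mulVec_smul, Matrix.mulVec_smul, hv, hx]
    funext j; simp only [Pi.add_apply, Pi.smul_apply, smul_eq_mul]; ring
  have hAZiv : ∀ i (w : Fin n → ℝ), A.mulVec ((Zmat A M (S i)).mulVec w) = 0 := by
    intro i w; rw [Matrix.mulVec_mulVec, Zmat_A A M (S i), Matrix.zero_mulVec]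
  by_cases hker : ∀ u : Fin n → ℝ, A.mulVec u = 0 → u = 0
  · -- degenerate case : ker A = 0
    have hveq : v = xs := by
      have := hker _ (hAdiff v hv); rwa [sub_eq_zero] at this
    have hxeq : x = xs := by
      have := hker _ (hAdiff x hx); rwa [sub_eq_zero] at this
    have hyeq : y = xs := by
      have := hker _ (hAdiff y hAy); rwa [sub_eq_zero] at this
    have hQi0 : ∀ i, (Zmat A M (S i)).mulVec g = 0 := fun i => hker _ (hAZiv i g)
    have hLz : ∀ i, vp i - xs = 0 := by
      intro i; rw [hvp i, hQi0 i, hveq, hyeq]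
      funext j; simp only [Pi.sub_apply, Pi.add_apply, Pi.smul_apply, smul_eq_mul,
        Pi.zero_apply, smul_zero, mul_zero]; ring
    have hxpeq : ∀ i, f (xp i) = fstar := by
      intro i; rw [hxp i, hQi0 i, sub_zero, hyeq, hfstar]
    have hL : ∑ i, P i * ((vp i - xs) ⬝ᵥ W.mulVec (vp i - xs) +
        2 * γ ^ 2 * ν * (f (xp i) - fstar)) = 0 := by
      apply Finset.sum_eq_zero; intro i _
      rw [hLz i, hxpeq i]; simp
    rw [hL, hveq, hxeq, hyeq, hfstar]
    simp
  · push_neg at hker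
    obtain ⟨u0, hu0A, hu0⟩ := hker
    -- ν is nonnegative
    have hν0 : 0 ≤ ν := by
      have h1 := hν u0 hu0A hu0
      have h2 : 0 < u0 ⬝ᵥ Z.mulVec u0 := hpd u0 hu0A hu0
      have h3 : 0 ≤ ∑ i, P i * ((Zmat A M (S i)).mulVec u0 ⬝ᵥ
          W.mulVec ((Zmat A M (S i)).mulVec u0)) :=
        Finset.sum_nonneg fun i _ => mul_nonneg (hP i) (hWpsd _)
      nlinarith
    -- Z and W commute, projection facts
    have hcomm : W * Z = Z * W := by
      rw [← hW.2.2.1, transpose_mul, hWs, hZs]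
    have hZZW : Z * (Z * W) = Z := by
      rw [← hcomm, ← Matrix.mul_assoc]; exact hW.1
    have hAZW : A * (Z * W) = 0 := by
      rw [← Matrix.mul_assoc, hZA, Matrix.zero_mul]
    have hZWu : ∀ u : Fin n → ℝ, A.mulVec u = 0 → (Z * W).mulVec u = u := by
      intro u hu
      by_contra hne
      have hwA : A.mulVec (u - (Z * W).mulVec u) = 0 := by
        rw [Matrix.mulVec_sub, hu, Matrix.mulVec_mulVec, ← Matrix.mul_assoc, hZA,
          Matrix.zero_mul, Matrix.zero_mulVec, sub_zero]
      have hZw : Z.mulVec (u - (Z * W).mulVec u) = 0 := by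
        rw [Matrix.mulVec_sub, Matrix.mulVec_mulVec, hZZW, sub_self]
      have hne' : u - (Z * W).mulVec u ≠ 0 := by
        intro h; exact hne (sub_eq_zero.mp h).symm
      have hcon := hpd _ hwA hne'
      rw [hZw, dotProduct_zero] at hcon
      exact lt_irrefl 0 hcon
    -- kernel of Z is contained in kernel of each Z_i (weighted)
    have hkerZi : ∀ (w : Fin n → ℝ), w ⬝ᵥ Z.mulVec w = 0 → ∀ i, P i ≠ 0 →
        (Zmat A M (S i)).mulVec w = 0 := by
      intro w hw i hPi
      have hsum0 : ∑ j, P j * (w ⬝ᵥ (Zmat A M (S j)).mulVec w) = 0 := by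
        rw [sumZ w w]; exact hw
      have hterm : P i * (w ⬝ᵥ (Zmat A M (S i)).mulVec w) = 0 :=
        (Finset.sum_eq_zero_iff_of_nonneg
          (fun j _ => mul_nonneg (hP j) (hZipsd j w))).mp hsum0 i (Finset.mem_univ i)
      have hq : w ⬝ᵥ (Zmat A M (S i)).mulVec w = 0 := by
        rcases mul_eq_zero.mp hterm with h | h
        · exact absurd h hPi
        · exact h
      by_contra hne
      have h2 := hMpd _ (hAZiv i w) hne
      rw [hZiquad i w] at hq
      linarith
    -- the ν bound applied to the projected gradient
    set u1 := (Z * W).mulVec g with hu1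
    have hAu1 : A.mulVec u1 = 0 := by
      rw [hu1, Matrix.mulVec_mulVec, ← Matrix.mul_assoc, hZA, Matrix.zero_mul,
        Matrix.zero_mulVec]
    have hZu1 : Z.mulVec u1 = Z.mulVec g := by
      rw [hu1, Matrix.mulVec_mulVec, hZZW]
    have hZiqu : ∀ i, P i ≠ 0 → (Zmat A M (S i)).mulVec g = (Zmat A M (S i)).mulVec u1 := by
      intro i hPi
      have h0 : (g - u1) ⬝ᵥ Z.mulVec (g - u1) = 0 := by
        rw [Matrix.mulVec_sub, hZu1, sub_self, dotProduct_zero]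
      have h1 := hkerZi _ h0 i hPi
      rw [Matrix.mulVec_sub] at h1
      exact sub_eq_zero.mp h1
    have hG2 : ∑ i, P i * ((Zmat A M (S i)).mulVec g ⬝ᵥ
        W.mulVec ((Zmat A M (S i)).mulVec g)) ≤ ν * (g ⬝ᵥ Z.mulVec g) := by
      by_cases hu10 : u1 = 0
      · have hZg0 : Z.mulVec g = 0 := by rw [← hZu1, hu10, Matrix.mulVec_zero]
        have hrhs : g ⬝ᵥ Z.mulVec g = 0 := by rw [hZg0, dotProduct_zero]
        rw [hrhs, mul_zero]
        apply le_of_eq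
        apply Finset.sum_eq_zero; intro i _
        by_cases hPi : P i = 0
        · rw [hPi, zero_mul]
        · rw [hZiqu i hPi, hu10, Matrix.mulVec_zero]; simp
      · have hb := hν u1 hAu1 hu10
        have heq2 : u1 ⬝ᵥ Z.mulVec u1 = g ⬝ᵥ Z.mulVec g := by
          rw [hZu1, hsym Z hZs u1 g, hZu1, dotProduct_comm]
        calc ∑ i, P i * ((Zmat A M (S i)).mulVec g ⬝ᵥ W.mulVec ((Zmat A M (S i)).mulVec g))
            = ∑ i, P i * ((Zmat A M (S i)).mulVec u1 ⬝ᵥ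
                W.mulVec ((Zmat A M (S i)).mulVec u1)) := by
              refine Finset.sum_congr rfl fun i _ => ?_
              by_cases hPi : P i = 0
              · rw [hPi, zero_mul, zero_mul]
              · rw [hZiqu i hPi]
          _ ≤ ν * (u1 ⬝ᵥ Z.mulVec u1) := hb
          _ = ν * (g ⬝ᵥ Z.mulVec g) := by rw [heq2]
    -- smoothness consequences
    have hAxp : ∀ i, A.mulVec (xp i) = b := by
      intro i; rw [hxp i, Matrix.mulVec_sub, hAy, hAZiv i g, sub_zero]
    have hfxp : ∀ i, f (xp i) ≤ f y - (1/2) * (g ⬝ᵥ (Zmat A M (S i)).mulVec g) := by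
      intro i
      have h0 := hsmooth y (xp i) hAy (hAxp i)
      rw [← hgdef] at h0
      have h1 : xp i - y = -(Zmat A M (S i)).mulVec g := by
        rw [hxp i]; funext j; simp
      rw [h1] at h0
      have h2 : g ⬝ᵥ (-(Zmat A M (S i)).mulVec g) = -(g ⬝ᵥ (Zmat A M (S i)).mulVec g) :=
        dotProduct_neg _ _
      have h3 : (-(Zmat A M (S i)).mulVec g) ⬝ᵥ M.mulVec (-(Zmat A M (S i)).mulVec g)
          = g ⬝ᵥ (Zmat A M (S i)).mulVec g := by
        rw [Matrix.mulVec_neg, dotProduct_neg, neg_dotProduct, neg_neg, ← hZiquad i g]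
      rw [h2, h3] at h0
      linarith
    have hKsum : ∑ i, P i * (f (xp i) - fstar)
        ≤ (f y - fstar) - (1/2) * (g ⬝ᵥ Z.mulVec g) := by
      have h4 : ∀ i ∈ Finset.univ, P i * (f (xp i) - fstar)
          ≤ P i * ((f y - fstar) - (1/2) * (g ⬝ᵥ (Zmat A M (S i)).mulVec g)) := fun i _ =>
        mul_le_mul_of_nonneg_left (by linarith [hfxp i]) (hP i)
      calc ∑ i, P i * (f (xp i) - fstar)
          ≤ ∑ i, P i * ((f y - fstar) - (1/2) * (g ⬝ᵥ (Zmat A M (S i)).mulVec g)) :=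
            Finset.sum_le_sum h4
        _ = (∑ i, P i) * (f y - fstar)
            - (1/2) * ∑ i, P i * (g ⬝ᵥ (Zmat A M (S i)).mulVec g) := by
            rw [Finset.sum_mul, Finset.mul_sum, ← Finset.sum_sub_distrib]
            exact Finset.sum_congr rfl fun i _ => by ring
        _ = (f y - fstar) - (1/2) * (g ⬝ᵥ Z.mulVec g) := by rw [hPsum, sumZ g g, one_mul]
    -- strong convexity consequences
    have hsub : ∀ a c : Fin n → ℝ, g ⬝ᵥ (a - c) = -(g ⬝ᵥ (c - a)) := by
      intro a c; rw [← neg_sub c a, dotProduct_neg]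
    have hquadflip : ∀ a c : Fin n → ℝ,
        (a - c) ⬝ᵥ W.mulVec (a - c) = (c - a) ⬝ᵥ W.mulVec (c - a) := by
      intro a c
      rw [← neg_sub c a, Matrix.mulVec_neg, dotProduct_neg, neg_dotProduct, neg_neg]
    have hA5 : f y - fstar + (σZ/2) * ((y - xs) ⬝ᵥ W.mulVec (y - xs)) ≤ g ⬝ᵥ (y - xs) := by
      have h0 := hsc xs y hxs hAy
      rw [hsub xs y, hquadflip xs y] at h0
      rw [hfstar] at h0
      linarith
    have hA4x : f y - f x ≤ g ⬝ᵥ (y - x) := by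
      have h0 := hsc x y hx hAy
      rw [hsub x y, hquadflip x y] at h0
      have hq : 0 ≤ (y - x) ⬝ᵥ W.mulVec (y - x) := hWpsd _
      nlinarith
    have hvy : v - y = ((1-α)/α) • (y - x) := by
      rw [hy]; funext j
      simp only [Pi.sub_apply, Pi.add_apply, Pi.smul_apply, smul_eq_mul]
      field_simp
      ring
    have hcoef : 0 ≤ (1-α)/α := div_nonneg (by linarith) hα0.le
    have hA4 : ((1-α)/α) * (f y - f x) + (f y - fstar)
        + (σZ/2) * ((y - xs) ⬝ᵥ W.mulVec (y - xs)) ≤ g ⬝ᵥ (v - xs) := by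
      have hsplit : g ⬝ᵥ (v - xs) = g ⬝ᵥ (v - y) + g ⬝ᵥ (y - xs) := by
        rw [← dotProduct_add, sub_add_sub_cancel]
      have h1 : g ⬝ᵥ (v - y) = ((1-α)/α) * (g ⬝ᵥ (y - x)) := by
        rw [hvy, dotProduct_smul, smul_eq_mul]
      have h2 := mul_le_mul_of_nonneg_left hA4x hcoef
      linarith [hA5]
    -- expansion of the expected quadratic
    set w0 : Fin n → ℝ := β • (v - xs) + (1-β) • (y - xs) with hw0
    have hvpxs : ∀ i, vp i - xs = w0 - γ • (Zmat A M (S i)).mulVec g := by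
      intro i; rw [hvp i, hw0]; funext j
      simp only [Pi.sub_apply, Pi.add_apply, Pi.smul_apply, smul_eq_mul]
      ring
    have hexpand : ∀ (q : Fin n → ℝ), (w0 - γ • q) ⬝ᵥ W.mulVec (w0 - γ • q)
        = w0 ⬝ᵥ W.mulVec w0 - 2*γ*(q ⬝ᵥ W.mulVec w0) + γ^2 * (q ⬝ᵥ W.mulVec q) := by
      intro q
      have hsymq := hdotW w0 q
      rw [hbilin3 w0 q γ]
      linear_combination (-γ) * hsymq
    have hAw0 : A.mulVec w0 = 0 := by
      rw [hw0, Matrix.mulVec_add, Matrix.mulVec_smul, Matrix.mulVec_smul, hAdiff v hv,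
        hAdiff y hAy, smul_zero, smul_zero, add_zero]
    have hE1 : ∑ i, P i * ((Zmat A M (S i)).mulVec g ⬝ᵥ W.mulVec w0) = g ⬝ᵥ w0 := by
      calc ∑ i, P i * ((Zmat A M (S i)).mulVec g ⬝ᵥ W.mulVec w0)
          = ∑ i, P i * (g ⬝ᵥ (Zmat A M (S i)).mulVec (W.mulVec w0)) := by
            refine Finset.sum_congr rfl fun i _ => ?_
            rw [hsym (Zmat A M (S i)) (Zmat_symm A M hMs (S i)) g (W.mulVec w0)]
        _ = g ⬝ᵥ Z.mulVec (W.mulVec w0) := sumZ g (W.mulVec w0)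
        _ = g ⬝ᵥ (Z * W).mulVec w0 := by rw [Matrix.mulVec_mulVec]
        _ = g ⬝ᵥ w0 := by rw [hZWu w0 hAw0]
    have hsum1 : ∑ i, P i * ((vp i - xs) ⬝ᵥ W.mulVec (vp i - xs) +
        2 * γ ^ 2 * ν * (f (xp i) - fstar))
        = w0 ⬝ᵥ W.mulVec w0 - 2*γ*(g ⬝ᵥ w0)
          + γ^2 * (∑ i, P i * ((Zmat A M (S i)).mulVec g ⬝ᵥ
              W.mulVec ((Zmat A M (S i)).mulVec g)))
          + 2*γ^2*ν * (∑ i, P i * (f (xp i) - fstar)) := by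
      calc ∑ i, P i * ((vp i - xs) ⬝ᵥ W.mulVec (vp i - xs) +
            2 * γ ^ 2 * ν * (f (xp i) - fstar))
          = ∑ i, ((w0 ⬝ᵥ W.mulVec w0) * P i
            + (-(2*γ)) * (P i * ((Zmat A M (S i)).mulVec g ⬝ᵥ W.mulVec w0))
            + γ^2 * (P i * ((Zmat A M (S i)).mulVec g ⬝ᵥ
                W.mulVec ((Zmat A M (S i)).mulVec g)))
            + (2*γ^2*ν) * (P i * (f (xp i) - fstar))) := by
            refine Finset.sum_congr rfl fun i _ => ?_
            rw [hvpxs i, hexpand]; ring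
        _ = (w0 ⬝ᵥ W.mulVec w0) * (∑ i, P i)
            + (-(2*γ)) * (∑ i, P i * ((Zmat A M (S i)).mulVec g ⬝ᵥ W.mulVec w0))
            + γ^2 * (∑ i, P i * ((Zmat A M (S i)).mulVec g ⬝ᵥ
                W.mulVec ((Zmat A M (S i)).mulVec g)))
            + (2*γ^2*ν) * (∑ i, P i * (f (xp i) - fstar)) := by
            rw [Finset.sum_add_distrib, Finset.sum_add_distrib, Finset.sum_add_distrib,
              ← Finset.mul_sum, ← Finset.mul_sum, ← Finset.mul_sum, ← Finset.mul_sum]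
        _ = _ := by rw [hPsum, hE1]; ring
    -- convexity of the quadratic form
    have hcross : w0 ⬝ᵥ W.mulVec w0 ≤ β * ((v - xs) ⬝ᵥ W.mulVec (v - xs))
        + (1-β) * ((y - xs) ⬝ᵥ W.mulVec (y - xs)) := by
      have hqvy : 0 ≤ (v - y) ⬝ᵥ W.mulVec (v - y) := hWpsd _
      have hsymvy := hdotW (v - xs) (y - xs)
      have e1 : w0 ⬝ᵥ W.mulVec w0
          = β^2 * ((v - xs) ⬝ᵥ W.mulVec (v - xs))
            + 2*β*(1-β)*((v - xs) ⬝ᵥ W.mulVec (y - xs))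
            + (1-β)^2 * ((y - xs) ⬝ᵥ W.mulVec (y - xs)) := by
        rw [hw0, hbilin (v - xs) (y - xs) β (1-β)]
        linear_combination (-(β*(1-β))) * hsymvy
      have e2 : (v - y) ⬝ᵥ W.mulVec (v - y)
          = ((v - xs) ⬝ᵥ W.mulVec (v - xs)) - 2*((v - xs) ⬝ᵥ W.mulVec (y - xs))
            + ((y - xs) ⬝ᵥ W.mulVec (y - xs)) := by
        have hveq : v - y = (v - xs) - (y - xs) := (sub_sub_sub_cancel_right v y xs).symm
        rw [hveq, hbilin2 (v - xs) (y - xs)]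
        linear_combination hsymvy
      have e3 : w0 ⬝ᵥ W.mulVec w0 = β * ((v - xs) ⬝ᵥ W.mulVec (v - xs))
          + (1-β) * ((y - xs) ⬝ᵥ W.mulVec (y - xs))
          - β * (1-β) * ((v - y) ⬝ᵥ W.mulVec (v - y)) := by
        linear_combination e1 + (β*(1-β)) * e2
      have e4 : 0 ≤ β * (1-β) * ((v - y) ⬝ᵥ W.mulVec (v - y)) :=
        mul_nonneg (mul_nonneg hβ0.le (by linarith : (0:ℝ) ≤ 1-β)) hqvy
      linarith [e3, e4]
    -- final assembly
    have hgw0 : g ⬝ᵥ w0 = β * (g ⬝ᵥ (v - xs)) + (1-β) * (g ⬝ᵥ (y - xs)) := by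
      rw [hw0, dotProduct_add, dotProduct_smul, dotProduct_smul]
      simp [smul_eq_mul]
    have hb4 := mul_le_mul_of_nonneg_left hA4
      (mul_nonneg (mul_nonneg (by norm_num : (0:ℝ) ≤ 2) hγ.le) hβ0.le)
    have hb5 := mul_le_mul_of_nonneg_left hA5
      (mul_nonneg (mul_nonneg (by norm_num : (0:ℝ) ≤ 2) hγ.le) (by linarith : (0:ℝ) ≤ 1-β))
    have hbG2 := mul_le_mul_of_nonneg_left hG2 (sq_nonneg γ)
    have hbK := mul_le_mul_of_nonneg_left hKsum
      (mul_nonneg (mul_nonneg (by norm_num : (0:ℝ) ≤ 2) (sq_nonneg γ)) hν0)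
    rw [hsum1, hgw0]
    linarith [hcross, hb4, hb5, hbG2, hbK]
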